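/- arXiv:2105.01977 — 2 statements merged into one kernel-verified Lean document; each statement's English description precedes it below -/
import Mathlib

section
/- Let Ω ⊆ ℝ^m be a set, u ∈ Ω a point such that the closed ball B(u, ε r_g) is contained in Ω, and p ∈ ℝ^m. Then sup over v ∈ Ω with |u-v| ≤ ε r_g of J_ε(u,v)·⟨v - u, p⟩ equals |p|, provided sup_{τ ∈ [0,r_g]} τ g(τ) is attained and equals C_g > 0. -/
open scoped RealInnerProductSpace

/-- If the closed ball `B(u, ε r_g)` is contained in `Ω`, and
`C_g = sup_{τ ∈ [0,r_g]} τ g(τ) > 0` is attained, then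
`sup { J_ε(u,v) ⟪v - u, p⟫ : v ∈ Ω, ‖u-v‖ ≤ ε r_g } = ‖p‖`,
where `J_ε(u,v) = (ε C_g)⁻¹ g(‖u-v‖/ε)`. -/
theorem stmt_3 {m : ℕ} (g : ℝ → ℝ) (C_g r_g ε : ℝ)
    (hε : 0 < ε) (hr : 0 < r_g) (hC_pos : 0 < C_g)
    (hg_nonneg : ∀ t, 0 ≤ t → 0 ≤ g t)
    (hg_supp : ∀ t, 0 ≤ t → r_g < t → g t = 0)
    (hg_cont : ContinuousOn g (Set.Icc 0 r_g))
    (hC_ub : ∀ τ ∈ Set.Icc (0:ℝ) r_g, τ * g τ ≤ C_g)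
    (hC_attained : ∃ τ ∈ Set.Icc (0:ℝ) r_g, τ * g τ = C_g)
    (Ω : Set (EuclideanSpace ℝ (Fin m)))
    (u : EuclideanSpace ℝ (Fin m)) (hu : u ∈ Ω)
    (hball : Metric.closedBall u (ε * r_g) ⊆ Ω)
    (p : EuclideanSpace ℝ (Fin m)) :
    sSup {x : ℝ | ∃ v ∈ Ω, ‖u - v‖ ≤ ε * r_g ∧
        x = ((ε * C_g)⁻¹ * g (‖u - v‖ / ε)) * ⟪v - u, p⟫} = ‖p‖ := by
  obtain ⟨τ₀, hτ₀mem, hτ₀⟩ := hC_attained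
  have hτ₀pos : 0 < τ₀ := by
    rcases lt_or_eq_of_le hτ₀mem.1 with h | h
    · exact h
    · exfalso; rw [← h] at hτ₀; simp at hτ₀; linarith
  have hgτ₀pos : 0 < g τ₀ := by
    by_contra h
    push_neg at h
    nlinarith [hg_nonneg τ₀ hτ₀mem.1]
  -- upper bound
  have hub : ∀ x ∈ {x : ℝ | ∃ v ∈ Ω, ‖u - v‖ ≤ ε * r_g ∧
      x = ((ε * C_g)⁻¹ * g (‖u - v‖ / ε)) * ⟪v - u, p⟫}, x ≤ ‖p‖ := by
    rintro x ⟨v, hv, hle, rfl⟩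
    set t : ℝ := ‖u - v‖ / ε with ht
    have ht0 : 0 ≤ t := div_nonneg (norm_nonneg _) hε.le
    have htr : t ≤ r_g := by
      rw [ht, div_le_iff₀ hε]; linarith [hle]
    have hnorm : ‖v - u‖ = ε * t := by
      rw [ht, mul_div_cancel₀ _ hε.ne', ← norm_neg, neg_sub]
    have hinner : ⟪v - u, p⟫ ≤ ‖v - u‖ * ‖p‖ := real_inner_le_norm _ _
    have hc : (0:ℝ) ≤ (ε * C_g)⁻¹ * g t :=
      mul_nonneg (inv_nonneg.2 (mul_nonneg hε.le hC_pos.le)) (hg_nonneg t ht0)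
    calc ((ε * C_g)⁻¹ * g t) * ⟪v - u, p⟫
        ≤ ((ε * C_g)⁻¹ * g t) * (‖v - u‖ * ‖p‖) := mul_le_mul_of_nonneg_left hinner hc
      _ = (t * g t / C_g) * ‖p‖ := by
          rw [hnorm]; field_simp
      _ ≤ 1 * ‖p‖ := by
          apply mul_le_mul_of_nonneg_right _ (norm_nonneg p)
          rw [div_le_one hC_pos]
          exact hC_ub t ⟨ht0, htr⟩
      _ = ‖p‖ := one_mul _
  -- the value ‖p‖ is attained
  have hmem : ‖p‖ ∈ {x : ℝ | ∃ v ∈ Ω, ‖u - v‖ ≤ ε * r_g ∧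
      x = ((ε * C_g)⁻¹ * g (‖u - v‖ / ε)) * ⟪v - u, p⟫} := by
    by_cases hp : p = 0
    · refine ⟨u, hu, by simpa using mul_nonneg hε.le hr.le, ?_⟩
      simp [hp]
    · have hpn : 0 < ‖p‖ := norm_pos_iff.2 hp
      set v : EuclideanSpace ℝ (Fin m) := u + (ε * τ₀ * ‖p‖⁻¹) • p with hvdef
      have hvu : v - u = (ε * τ₀ * ‖p‖⁻¹) • p := by simp [hvdef]
      have hnorm : ‖u - v‖ = ε * τ₀ := by
        rw [← norm_neg, neg_sub, hvu, norm_smul]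
        rw [Real.norm_eq_abs, abs_of_pos (by positivity)]
        field_simp
      refine ⟨v, hball ?_, ?_, ?_⟩
      · rw [Metric.mem_closedBall, dist_comm, dist_eq_norm, hnorm]
        exact mul_le_mul_of_nonneg_left hτ₀mem.2 hε.le
      · rw [hnorm]
        exact mul_le_mul_of_nonneg_left hτ₀mem.2 hε.le
      · rw [hnorm, hvu, real_inner_smul_left, real_inner_self_eq_norm_sq,
          mul_comm ε τ₀, mul_div_assoc, div_self hε.ne', mul_one]
        rw [← hτ₀]
        field_simp
  refine le_antisymm (csSup_le ⟨‖p‖, hmem⟩ hub) (le_csSup ⟨‖p‖, hub⟩ hmem)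
end

section
/- Comparison principle for the explicit Euler scheme: Let Ω̃ be a finite set, Γ̃ ⊆ Ω̃, and J : Ω̃ × Ω̃ → [0,∞) with Δt·J(u,v) ≤ 1 for all u,v. Suppose f, g : Ω̃ × {t₀,…,t_N} → ℝ satisfy, for all u ∈ Ω̃∖Γ̃ and i ≥ 1: (f(u,tᵢ) − f(u,tᵢ₋₁))/Δt ≤ −max_v J(u,v)(f(u,tᵢ₋₁) − f(v,tᵢ₋₁)) + P̃(u), and the reverse inequality with ≥ for g, and f ≤ g on (Γ̃ × {t₁,…,t_N}) ∪ (Ω̃ × {t₀}). Then f ≤ g on all of Ω̃ × {t₀,…,t_N}. -/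
/-- Comparison principle for the explicit Euler scheme: if `f` is a discrete
sub-solution and `g` a discrete super-solution of the forward-Euler nonlocal
Eikonal scheme (with the CFL condition `Δt J(u,v) ≤ 1`), and `f ≤ g` on the
parabolic boundary, then `f ≤ g` everywhere. -/
theorem stmt_12 {ι : Type*} (Ωt Γt : Finset ι) (hΓ : Γt ⊆ Ωt)
    (hne : Ωt.Nonempty)
    (J : ι → ι → ℝ) (hJ : ∀ u v, 0 ≤ J u v)
    (Δt : ℝ) (hΔt : 0 < Δt) (hCFL : ∀ u v, Δt * J u v ≤ 1)
    (Pt : ι → ℝ) (N : ℕ)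
    (f g : ι → ℕ → ℝ)
    (hf : ∀ u ∈ Ωt, u ∉ Γt → ∀ i, 1 ≤ i → i ≤ N →
      (f u i - f u (i - 1)) / Δt ≤
        -(Ωt.sup' hne fun v => J u v * (f u (i - 1) - f v (i - 1))) + Pt u)
    (hg : ∀ u ∈ Ωt, u ∉ Γt → ∀ i, 1 ≤ i → i ≤ N →
      (g u i - g u (i - 1)) / Δt ≥
        -(Ωt.sup' hne fun v => J u v * (g u (i - 1) - g v (i - 1))) + Pt u)
    (hbdryΓ : ∀ u ∈ Γt, ∀ i, 1 ≤ i → i ≤ N → f u i ≤ g u i)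
    (hbdry0 : ∀ u ∈ Ωt, f u 0 ≤ g u 0) :
    ∀ u ∈ Ωt, ∀ i, i ≤ N → f u i ≤ g u i := by
  intro u hu i
  induction i generalizing u with
  | zero => intro _; exact hbdry0 u hu
  | succ n ih =>
    intro hiN
    by_cases hΓu : u ∈ Γt
    · exact hbdryΓ u hΓu (n + 1) (Nat.succ_le_succ (Nat.zero_le n)) hiN
    · have hIH : ∀ v ∈ Ωt, f v n ≤ g v n := fun v hv => ih v hv (Nat.le_of_succ_le hiN)
      obtain ⟨v, hv, hv2⟩ := Ωt.exists_mem_eq_sup' hne (fun w => J u w * (g u n - g w n))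
      have hf' := hf u hu hΓu (n + 1) (by omega) hiN
      have hg' := hg u hu hΓu (n + 1) (by omega) hiN
      simp only [Nat.add_sub_cancel] at hf' hg'
      have hsf : J u v * (f u n - f v n) ≤ Ωt.sup' hne fun w => J u w * (f u n - f w n) :=
        Finset.le_sup' (fun w => J u w * (f u n - f w n)) hv
      rw [div_le_iff₀ hΔt] at hf'
      rw [ge_iff_le, le_div_iff₀ hΔt] at hg'
      have hcfl := hCFL u v
      have hJuv := hJ u v
      have heu := hIH u hu
      have hev := hIH v hv
      nlinarith [mul_nonneg (mul_nonneg hΔt.le hJuv) (sub_nonneg.mpr hev),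
        mul_nonneg (sub_nonneg.mpr hcfl) (sub_nonneg.mpr heu),
        mul_le_mul_of_nonneg_left hsf hΔt.le]
end
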